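/- Let ℓ_r(θ) = ℓ(θ + θ₀) + γ‖θ‖² where ℓ has a (θ†, P)-reflection symmetry. If ℓ_r has a (θ', P)-reflection symmetry with Pθ' = 0, then P(θ' + θ₀) must equal Pθ† where θ† is the center of some reflection symmetry of ℓ associated with P. -/

import Mathlib

open Matrix

theorem stmt7 {d : ℕ} (ℓ : (Fin d → ℝ) → ℝ) (P : Matrix (Fin d) (Fin d) ℝ)
    (hproj : P * P = P) (hsymm : Pᵀ = P)
    (γ : ℝ) (hγ : 0 < γ) (θ₀ θ' : Fin d → ℝ)
    (hθ' : P *ᵥ θ' = 0)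
    (hsym : ∀ θ,
      (fun ψ => ℓ (ψ + θ₀) + γ * (ψ ⬝ᵥ ψ)) (θ + θ')
        = (fun ψ => ℓ (ψ + θ₀) + γ * (ψ ⬝ᵥ ψ)) ((1 - 2 • P) *ᵥ θ + θ')) :
    ∃ θd, (∀ θ, ℓ (θ + θd) = ℓ ((1 - 2 • P) *ᵥ θ + θd)) ∧
      P *ᵥ (θ' + θ₀) = P *ᵥ θd := by
  refine ⟨θ' + θ₀, fun θ => ?_, rfl⟩
  have h := hsym θ
  simp only at h
  set A : Matrix (Fin d) (Fin d) ℝ := 1 - 2 • P with hA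
  have hAT : Aᵀ = A := by
    simp only [hA, Matrix.transpose_sub, Matrix.transpose_one, Matrix.transpose_smul, hsymm]
  have hA2 : A * A = 1 := by
    simp only [hA, mul_sub, sub_mul, one_mul, mul_one, Matrix.smul_mul, Matrix.mul_smul, hproj,
      smul_smul]
    abel_nf
  have h1 : (A *ᵥ θ) ⬝ᵥ (A *ᵥ θ) = θ ⬝ᵥ θ := by
    rw [Matrix.dotProduct_mulVec, ← Matrix.mulVec_transpose, hAT, Matrix.mulVec_mulVec, hA2,
      Matrix.one_mulVec]
  have hAθ' : A *ᵥ θ' = θ' := by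
    simp [hA, Matrix.sub_mulVec, Matrix.smul_mulVec, ← Matrix.mulVec_mulVec, hθ']
  have h2 : (A *ᵥ θ) ⬝ᵥ θ' = θ ⬝ᵥ θ' := by
    rw [← hAθ', Matrix.dotProduct_mulVec, ← Matrix.mulVec_transpose, hAT,
      Matrix.mulVec_mulVec, hA2, Matrix.one_mulVec, hAθ']
  have h3 : θ' ⬝ᵥ (A *ᵥ θ) = θ' ⬝ᵥ θ := by
    rw [dotProduct_comm, h2, dotProduct_comm]
  have hq : (θ + θ') ⬝ᵥ (θ + θ') = (A *ᵥ θ + θ') ⬝ᵥ (A *ᵥ θ + θ') := by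
    simp only [add_dotProduct, dotProduct_add, h1, h2, h3]
  rw [hq] at h
  have := add_right_cancel h
  simpa [add_assoc] using this
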